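/- Let S = Spec A be an affine surface, o = V(x,y) a complete-intersection smooth point, S̃ ⊂ S × ℙ¹ the blow-up {xt₁ = yt₀}, and θ : W → S̃ any torsor under the line bundle M(ℓ) = Spec Sym O_{S̃}(-ℓE) for some ℓ ≥ 0. Then H¹(W, O_W) = 0. -/

import Mathlib

set_option synthInstance.maxHeartbeats 1000000
set_option maxHeartbeats 1000000

/-- Chart at `0` of the blow-up of `Spec A` at `o = V(x,y)`: `R₀ = A[z]/(x - y·z)`. -/
noncomputable abbrev BlowChart (A : Type*) [CommRing A] (x y : A) : Type _ :=
  Polynomial A ⧸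
    Ideal.span {(Polynomial.C x - Polynomial.C y * Polynomial.X : Polynomial A)}

/-- The coordinate ring `R₀[u]` of the chart `W₀` of an `M(ℓ)`-torsor over the blow-up. -/
noncomputable abbrev WChart (A : Type*) [CommRing A] (x y : A) : Type _ :=
  Polynomial (BlowChart A x y)

/-- The coordinate ring `(R₀)_z[u]` of the overlap `W₀ ∩ W_∞`, realized as the
localization of `R₀[u]` at `z`. -/
noncomputable abbrev WOverlap (A : Type*) [CommRing A] (x y : A) : Type _ :=
  Localization.Away
    (Polynomial.C (Ideal.Quotient.mk _ Polynomial.X : BlowChart A x y) : WChart A x y)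

private lemma key_lemma {A L : Type*} [CommRing A] [CommRing L] [Algebra A L]
    (z u w p : L) (ℓ : ℕ) (hzw : z * w = 1)
    (hp : p ∈ Submodule.span A {q : L | ∃ a b : ℕ, q = z ^ a * w ^ b})
    {c : L}
    (hc : c ∈ Submodule.span A {q : L | ∃ k n m : ℕ, q = z ^ k * w ^ n * u ^ m}) :
    c ∈ Subalgebra.toSubmodule (Algebra.adjoin A {z, u}) ⊔
        Subalgebra.toSubmodule (Algebra.adjoin A {w, z ^ ℓ * u + p}) := by
  set v : L := z ^ ℓ * u + p with hv
  have hzwp : ∀ a : ℕ, z ^ a * w ^ a = 1 := fun a => by rw [← mul_pow, hzw, one_pow]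
  have hwD : w ∈ Algebra.adjoin A {w, v} := Algebra.subset_adjoin (Set.mem_insert _ _)
  have hvD : v ∈ Algebra.adjoin A {w, v} := Algebra.subset_adjoin (Set.mem_insert_of_mem _ rfl)
  have hzS : z ∈ Algebra.adjoin A ({z, u} : Set L) := Algebra.subset_adjoin (Set.mem_insert _ _)
  have huS : u ∈ Algebra.adjoin A ({z, u} : Set L) :=
    Algebra.subset_adjoin (Set.mem_insert_of_mem _ rfl)
  have hPLmul : ∀ (k n j m : ℕ), j < m →
      z ^ k * w ^ n * u ^ j * p ∈
        Submodule.span A {q : L | ∃ a b i : ℕ, i < m ∧ q = z ^ a * w ^ b * u ^ i} := by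
    intro k n j m hj
    refine Submodule.span_induction (fun q hq => ?_) ?_ (fun q r _ _ h1 h2 => ?_)
      (fun a q _ h1 => ?_) hp
    · obtain ⟨a, b, rfl⟩ := hq
      exact Submodule.subset_span ⟨k + a, n + b, j, hj, by ring⟩
    · simpa using Submodule.zero_mem _
    · rw [mul_add]; exact add_mem h1 h2
    · rw [mul_smul_comm]; exact Submodule.smul_mem _ _ h1
  have hLm : ∀ m : ℕ, v ^ m - z ^ (ℓ * m) * u ^ m ∈
      Submodule.span A {q : L | ∃ a b i : ℕ, i < m ∧ q = z ^ a * w ^ b * u ^ i} := by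
    intro m
    induction m with
    | zero =>
      have h0 : v ^ 0 - z ^ (ℓ * 0) * u ^ 0 = 0 := by simp
      rw [h0]; exact Submodule.zero_mem _
    | succ m ih =>
      have key : v ^ (m + 1) - z ^ (ℓ * (m + 1)) * u ^ (m + 1)
          = v * (v ^ m - z ^ (ℓ * m) * u ^ m) + z ^ (ℓ * m) * u ^ m * p := by
        have hℓ : ℓ * (m + 1) = ℓ * m + ℓ := by ring
        rw [hℓ, hv, pow_add]; ring
      rw [key]
      refine add_mem ?_ ?_
      · refine Submodule.span_induction (fun q hq => ?_) ?_ (fun q r _ _ h1 h2 => ?_)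
          (fun a q _ h1 => ?_) ih
        · obtain ⟨a, b, i, hi, rfl⟩ := hq
          have e : v * (z ^ a * w ^ b * u ^ i) = z ^ (a + ℓ) * w ^ b * u ^ (i + 1)
              + z ^ a * w ^ b * u ^ i * p := by rw [hv, pow_add, pow_add]; ring
          rw [e]
          exact add_mem (Submodule.subset_span ⟨a + ℓ, b, i + 1, by omega, rfl⟩)
            (hPLmul a b i (m + 1) (by omega))
        · simpa using Submodule.zero_mem _
        · rw [mul_add]; exact add_mem h1 h2
        · rw [mul_smul_comm]; exact Submodule.smul_mem _ _ h1
      · have h2 := hPLmul (ℓ * m) 0 m (m + 1) (by omega)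
        simpa using h2
  have hMain : ∀ m k n : ℕ, z ^ k * w ^ n * u ^ m ∈
      Subalgebra.toSubmodule (Algebra.adjoin A ({z, u} : Set L)) ⊔
        Subalgebra.toSubmodule (Algebra.adjoin A ({w, v} : Set L)) := by
    intro m
    induction m using Nat.strong_induction_on with
    | _ m IH =>
      intro k n
      rcases le_or_gt n k with h | h
      · obtain ⟨d, rfl⟩ := Nat.exists_eq_add_of_le h
        have e : z ^ (n + d) * w ^ n * u ^ m = z ^ d * u ^ m * (z ^ n * w ^ n) := by
          rw [pow_add]; ring
        rw [e, hzwp, mul_one]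
        exact Submodule.mem_sup_left
          ((Subalgebra.mem_toSubmodule _).mpr (mul_mem (pow_mem hzS d) (pow_mem huS m)))
      · obtain ⟨d, rfl⟩ := Nat.exists_eq_add_of_le h.le
        have e : z ^ k * w ^ (k + d) * u ^ m
            = w ^ (d + ℓ * m) * v ^ m - w ^ (d + ℓ * m) * (v ^ m - z ^ (ℓ * m) * u ^ m) := by
          linear_combination (w ^ d * u ^ m) * hzwp k - (w ^ d * u ^ m) * hzwp (ℓ * m)
        rw [e]
        refine sub_mem
          (Submodule.mem_sup_right ((Subalgebra.mem_toSubmodule _).mpr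
            (mul_mem (pow_mem hwD _) (pow_mem hvD m)))) ?_
        refine Submodule.span_induction (fun q hq => ?_) ?_ (fun q r _ _ h1 h2 => ?_)
          (fun a q _ h1 => ?_) (hLm m)
        · obtain ⟨a, b, i, hi, rfl⟩ := hq
          have e2 : w ^ (d + ℓ * m) * (z ^ a * w ^ b * u ^ i)
              = z ^ a * w ^ (b + (d + ℓ * m)) * u ^ i := by rw [pow_add]; ring
          rw [e2]; exact IH i hi a _
        · simpa using Submodule.zero_mem _
        · rw [mul_add]; exact add_mem h1 h2
        · rw [mul_smul_comm]; exact Submodule.smul_mem _ _ h1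
  refine Submodule.span_induction (fun q hq => ?_) (Submodule.zero_mem _)
    (fun a b _ _ ha hb => add_mem ha hb) (fun a q _ hq => Submodule.smul_mem _ _ hq) hc
  obtain ⟨k, n, m, rfl⟩ := hq
  exact hMain m k n

/-- `H¹(W, O_W) = 0` for any `M(ℓ)`-torsor `W` over the blow-up `S̃` of the affine
surface `S = Spec A` at the complete-intersection point `o = V(x,y)`, computed by Čech
cohomology for the standard two-chart cover: `W` is glued from `W₀ = Spec R₀[u]`
(with `R₀ = A[z]/(x - yz)`) and `W_∞ = Spec A[z'][u']` over the overlap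
`Spec (R₀)_z[u]` by `z' = z⁻¹`, `u' = z^ℓ·u + p` for some `p ∈ A[z^{±1}]`.  The claim:
every Čech `1`-cocycle with values in `O_W` for this cover, i.e. every element `c` of
`(R₀)_z[u]`, is a coboundary: `c = b₀ - b_∞` with `b₀` in the image of `R₀[u]` and
`b_∞` in the image of `A[z'][u']`, the `A`-subalgebra generated by `z⁻¹` and
`z^ℓ·u + p`. -/
theorem stmt_13 (A : Type*) [CommRing A] [IsDomain A] (x y : A) (ℓ : ℕ)
    (p : WOverlap A x y)
    (hp : p ∈ Algebra.adjoin A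
      ({@algebraMap (WChart A x y) (WOverlap A x y) Polynomial.commSemiring _ _
          (Polynomial.C (Ideal.Quotient.mk _ Polynomial.X)),
        IsLocalization.Away.invSelf
          (Polynomial.C (Ideal.Quotient.mk _ Polynomial.X : BlowChart A x y) : WChart A x y)} :
        Set (WOverlap A x y)))
    (c : WOverlap A x y) :
    ∃ b₀ : WChart A x y,
      ∃ bi ∈ Algebra.adjoin A
        ({IsLocalization.Away.invSelf
            (Polynomial.C (Ideal.Quotient.mk _ Polynomial.X : BlowChart A x y) : WChart A x y),
          (@algebraMap (WChart A x y) (WOverlap A x y) Polynomial.commSemiring _ _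
              (Polynomial.C (Ideal.Quotient.mk _ Polynomial.X : BlowChart A x y))) ^ ℓ *
            @algebraMap (WChart A x y) (WOverlap A x y) Polynomial.commSemiring _ _ Polynomial.X + p} :
          Set (WOverlap A x y)),
        c = @algebraMap (WChart A x y) (WOverlap A x y) Polynomial.commSemiring _ _ b₀ - bi := by
  set zR : WChart A x y := Polynomial.C (Ideal.Quotient.mk _ Polynomial.X) with hzR
  set z : WOverlap A x y := @algebraMap (WChart A x y) (WOverlap A x y) Polynomial.commSemiring _ _ zR with hz
  set u : WOverlap A x y := @algebraMap (WChart A x y) (WOverlap A x y) Polynomial.commSemiring _ _ Polynomial.X with hu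
  set w : WOverlap A x y := IsLocalization.Away.invSelf zR with hw
  have hzw : z * w = 1 := IsLocalization.Away.mul_invSelf zR
  have hzwp : ∀ a : ℕ, z ^ a * w ^ a = 1 := fun a => by rw [← mul_pow, hzw, one_pow]
  -- (a) p lies in the span of Laurent monomials
  have hp' : p ∈ Submodule.span A {q : WOverlap A x y | ∃ a b : ℕ, q = z ^ a * w ^ b} := by
    have h1 : p ∈ Submodule.span A
        ((Submonoid.closure ({z, w} : Set (WOverlap A x y)) : Submonoid (WOverlap A x y)) :
          Set (WOverlap A x y)) := by
      rw [← Algebra.adjoin_eq_span]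
      exact hp
    refine Submodule.span_mono ?_ h1
    intro q hq
    refine Submonoid.closure_induction (fun r hr => ?_) ⟨0, 0, by simp⟩
      (fun r s _ _ h1 h2 => ?_) hq
    · rcases hr with rfl | rfl
      · exact ⟨1, 0, by simp⟩
      · exact ⟨0, 1, by simp⟩
    · obtain ⟨a, b, rfl⟩ := h1
      obtain ⟨a', b', rfl⟩ := h2
      exact ⟨a + a', b + b', by rw [pow_add, pow_add]; ring⟩
  -- (b) c lies in the span of monomials z^k w^n u^m
  have hc : c ∈ Submodule.span A
      {q : WOverlap A x y | ∃ k n m : ℕ, q = z ^ k * w ^ n * u ^ m} := by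
    obtain ⟨⟨r, s⟩, hrs⟩ := IsLocalization.surj (Submonoid.powers zR) c
    obtain ⟨n, hn⟩ := s.2
    have hc1 : c = @algebraMap (WChart A x y) (WOverlap A x y) Polynomial.commSemiring _ _ r * w ^ n := by
      have hn' : zR ^ n = (s : WChart A x y) := hn
      have h2 : c * z ^ n = @algebraMap (WChart A x y) (WOverlap A x y) Polynomial.commSemiring _ _ r := by
        rw [hz, ← map_pow, hn']
        exact hrs
      calc c = c * (z ^ n * w ^ n) := by rw [hzwp, mul_one]
        _ = (c * z ^ n) * w ^ n := by ring
        _ = _ := by rw [h2]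
    rw [hc1]
    clear hc1 hrs hn
    induction r using Polynomial.induction_on' with
    | add f g hf hg => rw [map_add, add_mul]; exact add_mem hf hg
    | monomial m b =>
      obtain ⟨q, rfl⟩ := Ideal.Quotient.mk_surjective b
      induction q using Polynomial.induction_on' with
      | add f g hf hg =>
        rw [map_add, map_add, map_add, add_mul]
        exact add_mem hf hg
      | monomial k a =>
        have e : (Polynomial.monomial m
              ((Ideal.Quotient.mk _) (Polynomial.monomial k a)) : WChart A x y)
            = Polynomial.C ((Ideal.Quotient.mk _) (Polynomial.C a)) * zR ^ k
                * Polynomial.X ^ m := by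
          rw [hzR, ← Polynomial.C_pow, ← Polynomial.C_mul,
            Polynomial.C_mul_X_pow_eq_monomial]
          congr 1
          rw [← map_pow, ← map_mul, Polynomial.C_mul_X_pow_eq_monomial]
        have ha : (Polynomial.C ((Ideal.Quotient.mk _) (Polynomial.C a)) : WChart A x y)
            = algebraMap A (WChart A x y) a := by
          rw [IsScalarTower.algebraMap_apply A (BlowChart A x y) (WChart A x y),
            IsScalarTower.algebraMap_apply A (Polynomial A) (BlowChart A x y),
            Ideal.Quotient.algebraMap_eq]
          rw [show (algebraMap A (Polynomial A)) a = Polynomial.C a from rfl]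
          rw [show (algebraMap (BlowChart A x y) (WChart A x y)) = Polynomial.C from rfl]
        have ha' : @algebraMap (WChart A x y) (WOverlap A x y) Polynomial.commSemiring _ _
              (Polynomial.C ((Ideal.Quotient.mk _) (Polynomial.C a)))
            = algebraMap A (WOverlap A x y) a := by
          rw [ha, ← IsScalarTower.algebraMap_apply]
        rw [e, map_mul, map_mul, map_pow, map_pow, ← hz, ← hu, ha']
        have e2 : algebraMap A (WOverlap A x y) a * z ^ k * u ^ m * w ^ n
            = a • (z ^ k * w ^ n * u ^ m) := by
          rw [Algebra.smul_def]; ring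
        rw [e2]
        exact Submodule.smul_mem _ _ (Submodule.subset_span ⟨k, n, m, rfl⟩)
  -- apply the key lemma and conclude
  have hcD := key_lemma z u w p ℓ hzw hp' hc
  rw [Submodule.mem_sup] at hcD
  obtain ⟨b, hb, b', hb', hsum⟩ := hcD
  have hbrange : b ∈ (IsScalarTower.toAlgHom A (WChart A x y) (WOverlap A x y)).range := by
    refine Algebra.adjoin_le ?_ hb
    rintro q (rfl | rfl)
    · exact ⟨zR, rfl⟩
    · exact ⟨Polynomial.X, rfl⟩
  obtain ⟨b₀, hb₀⟩ := hbrange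
  refine ⟨b₀, -b', neg_mem hb', ?_⟩
  have hb₀' : @algebraMap (WChart A x y) (WOverlap A x y) Polynomial.commSemiring _ _ b₀ = b := hb₀
  rw [sub_neg_eq_add, hb₀', hsum]
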